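/- Let (X,d) be a uniformly discrete bounded geometry metric space and {φ_i : X → Y_i}_{i=1}^n a strongly embeddable family of maps. If the preimages {φ_i⁻¹(w) : w ∈ Y_i, i = 1,…,n} form an equi-coarsely embeddable family of metric spaces, then X is coarsely embeddable into Hilbert space. -/

import Mathlib

open Metric Filter
open scoped ENNReal RealInnerProductSpace
noncomputable section

/-- Uniformly discrete metric space. -/
def UniformlyDiscrete (X : Type*) [MetricSpace X] : Prop :=
  ∃ c > (0:ℝ), ∀ x y : X, x ≠ y → c ≤ dist x y

/-- Bounded geometry: uniformly finite balls. -/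
def BoundedGeometry (X : Type*) [MetricSpace X] : Prop :=
  ∀ r : ℝ, ∃ N : ℕ, ∀ x : X,
    (Metric.closedBall x r).Finite ∧ (Metric.closedBall x r).ncard ≤ N

/-- A strongly embeddable family of maps `φ i : X → Y i`. -/
def SEFamily {X : Type*} [MetricSpace X] {n : ℕ} {Y : Fin n → Type*}
    (φ : ∀ i, X → Y i) : Prop :=
  ∀ R > (0:ℝ), ∀ ε > (0:ℝ), ∃ ξ : X → lp (fun _ : (Σ i, Y i) => ℝ) 2,
    (∀ x : X, ‖ξ x‖ = 1) ∧
    (∀ x y : X, dist x y ≤ R → ‖ξ x - ξ y‖ ≤ ε) ∧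
    (∀ δ > (0:ℝ), ∃ S : ℝ, ∀ x : X,
      (∑' w : {w : Σ i, Y i // ¬ ∃ z : X, dist x z < S ∧ φ w.1 z = w.2},
        (ξ x w.1) ^ 2) ≤ δ)

/-- A coarse embedding of `X` into the Hilbert space `H`: there are nondecreasing
functions `ρ₋, ρ₊` tending to infinity controlling `‖φ x - φ y‖` by `dist x y`. -/
def IsCoarseEmbedding {X : Type*} [MetricSpace X] {H : Type*} [NormedAddCommGroup H]
    (φ : X → H) : Prop :=
  ∃ ρm ρp : ℝ → ℝ, Monotone ρm ∧ Monotone ρp ∧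
    Tendsto ρm atTop atTop ∧ Tendsto ρp atTop atTop ∧
    ∀ x y : X, ρm (dist x y) ≤ ‖φ x - φ y‖ ∧ ‖φ x - φ y‖ ≤ ρp (dist x y)

/-- `X` is coarsely embeddable into a Hilbert space. -/
def CoarselyEmbeddable (X : Type*) [MetricSpace X] : Prop :=
  ∃ (H : Type) (nH : NormedAddCommGroup H)
    (_ : @InnerProductSpace ℝ H _ nH.toSeminormedAddCommGroup) (φ : X → H),
    @IsCoarseEmbedding X _ H nH φ

/-- Witness conditions for equi-coarse embeddability of a family of subsets of `X`. -/
def EquiCEWitness {X : Type*} [MetricSpace X] {I : Type*} (A : I → Set X)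
    (H : Type*) [NormedAddCommGroup H] [InnerProductSpace ℝ H]
    (ξ : ∀ j, A j → H) (R ε : ℝ) : Prop :=
  (∀ (j : I) (x : A j), ‖ξ j x‖ = 1) ∧
  (∀ (j : I) (x y : A j), dist (x : X) (y : X) ≤ R → ‖ξ j x - ξ j y‖ ≤ ε) ∧
  (∀ δ > (0:ℝ), ∃ S : ℝ, ∀ (j : I) (x y : A j),
    S ≤ dist (x : X) (y : X) → |(inner ℝ (ξ j x) (ξ j y) : ℝ)| ≤ δ)

/-- A family of subsets of `X` is equi-coarsely embeddable. -/
def EquiCoarselyEmbeddable {X : Type*} [MetricSpace X] {I : Type*} (A : I → Set X) : Prop :=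
  ∀ R > (0:ℝ), ∀ ε > (0:ℝ),
    ∃ (H : Type) (nH : NormedAddCommGroup H)
      (iH : @InnerProductSpace ℝ H _ nH.toSeminormedAddCommGroup)
      (ξ : ∀ j, A j → H), @EquiCEWitness X _ I A H nH iH ξ R ε


lemma rpow_two_toReal (r : ℝ) : r ^ (2:ℝ≥0∞).toReal = r ^ 2 := by
  rw [show (2:ℝ≥0∞).toReal = ((2:ℕ):ℝ) by norm_num, Real.rpow_natCast]

lemma lp2_summable_sq {α : Type*} {E : α → Type*} [∀ i, NormedAddCommGroup (E i)]
    (f : lp E 2) : Summable fun w => ‖f w‖ ^ 2 := by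
  have h := lp.memℓp f
  rw [memℓp_gen_iff (by norm_num : 0 < (2:ℝ≥0∞).toReal)] at h
  exact h.congr fun w => rpow_two_toReal _

lemma lp2_norm_sq {α : Type*} {E : α → Type*} [∀ i, NormedAddCommGroup (E i)]
    (f : lp E 2) : ‖f‖ ^ 2 = ∑' w, ‖f w‖ ^ 2 := by
  have h := lp.norm_rpow_eq_tsum (by norm_num : 0 < (2:ℝ≥0∞).toReal) f
  rw [rpow_two_toReal] at h
  rw [h]
  exact tsum_congr fun w => rpow_two_toReal _

lemma memℓp_two {α : Type*} {E : α → Type*} [∀ i, NormedAddCommGroup (E i)]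
    {f : ∀ i, E i} (h : Summable fun w => ‖f w‖ ^ 2) : Memℓp f 2 :=
  memℓp_gen <| h.congr fun w => (rpow_two_toReal _).symm


lemma tsum_five {α : Type*} (f1 f2 f3 f4 f5 : α → ℝ) (h1 : Summable f1) (h2 : Summable f2)
    (h3 : Summable f3) (h4 : Summable f4) (h5 : Summable f5) :
    ∑' w, (f1 w + f2 w + f3 w + f4 w + f5 w)
      = ∑' w, f1 w + ∑' w, f2 w + ∑' w, f3 w + ∑' w, f4 w + ∑' w, f5 w := by
  rw [Summable.tsum_add (((h1.add h2).add h3).add h4) h5, Summable.tsum_add ((h1.add h2).add h3) h4,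
    Summable.tsum_add (h1.add h2) h3, Summable.tsum_add h1 h2]

lemma tsum_six {α : Type*} (f1 f2 f3 f4 f5 f6 : α → ℝ) (h1 : Summable f1) (h2 : Summable f2)
    (h3 : Summable f3) (h4 : Summable f4) (h5 : Summable f5) (h6 : Summable f6) :
    ∑' w, (f1 w + f2 w + f3 w + f4 w + f5 w + f6 w)
      = ∑' w, f1 w + ∑' w, f2 w + ∑' w, f3 w + ∑' w, f4 w + ∑' w, f5 w + ∑' w, f6 w := by
  rw [Summable.tsum_add ((((h1.add h2).add h3).add h4).add h5) h6,
    tsum_five _ _ _ _ _ h1 h2 h3 h4 h5]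

set_option maxHeartbeats 2000000 in
lemma stage {X : Type} [MetricSpace X] {n : ℕ} {Y : Fin n → Type} (φ : ∀ i, X → Y i)
    (hse : SEFamily φ)
    (hequi : EquiCoarselyEmbeddable (fun p : Σ i, Y i => φ p.1 ⁻¹' {p.2}))
    (x₀ : X) (i₀ : Fin n) {R : ℝ} (hR : 0 < R) {ε : ℝ} (hε : 0 < ε) :
    ∃ (H : Type) (nH : NormedAddCommGroup H)
      (iH : @InnerProductSpace ℝ H _ nH.toSeminormedAddCommGroup) (η : X → H),
      (∀ x, ‖η x‖ = 1) ∧ (∀ x y : X, dist x y ≤ R → ‖η x - η y‖ ≤ ε) ∧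
      ∃ T : ℝ, ∀ x y : X, T ≤ dist x y →
        (@inner ℝ H iH.toInner (η x) (η y)) ≤ 1/2 := by
  classical
  set ε₀ : ℝ := ε/8 with hε₀def
  set ε' : ℝ := ε/4 with hε'def
  set δ : ℝ := min (ε^2/128) (1/64) with hδdef
  have hδ : 0 < δ := lt_min (by positivity) (by norm_num)
  have hδ64 : δ ≤ 1/64 := min_le_right _ _
  have hδε : δ ≤ ε^2/128 := min_le_left _ _
  obtain ⟨ξ, hξ1, hξ2, hξ3⟩ := hse R hR ε₀ (by positivity)
  obtain ⟨S, hS⟩ := hξ3 δ hδ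
  set S' : ℝ := max S 1 with hS'def
  have hS'pos : (0:ℝ) < S' := lt_of_lt_of_le one_pos (le_max_right _ _)
  obtain ⟨H, nH, iH, η, hw⟩ := hequi (2*S' + R) (by positivity) ε' (by positivity)
  obtain ⟨hη1, hη2, hη3⟩ := hw
  obtain ⟨S₁, hS₁⟩ := hη3 (1/4) (by norm_num)
  -- the "good" sets
  set G : X → Set (Σ i, Y i) := fun x => {w | ∃ z : X, dist x z < S' ∧ φ w.1 z = w.2}
    with hGdef
  -- auxiliary unit vectors
  have hmem : ∀ (w : Σ i, Y i) (z : X), φ w.1 z = w.2 →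
      z ∈ (fun p : Σ i, Y i => φ p.1 ⁻¹' {p.2}) w := fun w z h => h
  set u : (Σ i, Y i) → X → H := fun w x =>
    if h : w ∈ G x then η w ⟨h.choose, h.choose_spec.2⟩
    else η ⟨i₀, φ i₀ x₀⟩ ⟨x₀, rfl⟩ with hudef
  have hu1 : ∀ w x, ‖u w x‖ = 1 := by
    intro w x
    rw [hudef]
    dsimp only
    by_cases h : w ∈ G x
    · rw [dif_pos h]; exact hη1 _ _
    · rw [dif_neg h]; exact hη1 _ _
  have hugood : ∀ (w : Σ i, Y i) (x : X), w ∈ G x →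
      ∃ z : (fun p : Σ i, Y i => φ p.1 ⁻¹' {p.2}) w, dist x (z:X) < S' ∧ u w x = η w z := by
    intro w x h
    refine ⟨⟨h.choose, h.choose_spec.2⟩, h.choose_spec.1, ?_⟩
    rw [hudef]; dsimp only; rw [dif_pos h]
  -- summability of coordinate squares
  have hsum : ∀ x : X, Summable fun w => (ξ x w)^2 := fun x =>
    (lp2_summable_sq (ξ x)).congr fun w => by rw [Real.norm_eq_abs, sq_abs]
  have hnorm1 : ∀ x : X, ∑' w, (ξ x w)^2 = 1 := by
    intro x
    have h := lp2_norm_sq (ξ x)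
    rw [hξ1 x, one_pow] at h
    rw [show (fun w => (ξ x w)^2) = fun w => ‖ξ x w‖^2 by
      funext w; rw [Real.norm_eq_abs, sq_abs]]
    exact h.symm
  -- tail bound with S'
  have hTail : ∀ x : X, ∑' w, ((G x)ᶜ).indicator (fun w => (ξ x w)^2) w ≤ δ := by
    intro x
    set C : Set (Σ i, Y i) := {w | ¬ ∃ z : X, dist x z < S ∧ φ w.1 z = w.2} with hCdef
    have hsub : (G x)ᶜ ⊆ C := by
      intro w hw
      simp only [hGdef, Set.mem_compl_iff, Set.mem_setOf_eq] at hw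
      simp only [hCdef, Set.mem_setOf_eq]
      intro ⟨z, hz1, hz2⟩
      exact hw ⟨z, lt_of_lt_of_le hz1 (le_max_left _ _), hz2⟩
    calc ∑' w, ((G x)ᶜ).indicator (fun w => (ξ x w)^2) w
        ≤ ∑' w, C.indicator (fun w => (ξ x w)^2) w := by
          refine Summable.tsum_le_tsum (fun w => ?_) ((hsum x).indicator _) ((hsum x).indicator _)
          exact Set.indicator_le_indicator_of_subset hsub (fun a => sq_nonneg _) w
      _ = ∑' w : C, (ξ x w)^2 := (tsum_subtype C _).symm
      _ ≤ δ := hS x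
  -- the combined map
  have hmemζ : ∀ x : X, Memℓp (fun w => ξ x w • u w x) 2 := by
    intro x
    apply memℓp_two
    refine (hsum x).congr fun w => ?_
    rw [norm_smul, Real.norm_eq_abs, hu1, mul_one, sq_abs]
  set ζ : X → lp (fun _ : Σ i, Y i => H) 2 := fun x => ⟨fun w => ξ x w • u w x, hmemζ x⟩
    with hζdef
  have hζco : ∀ (x : X) (w : Σ i, Y i), ζ x w = ξ x w • u w x := fun x w => rfl
  refine ⟨lp (fun _ : Σ i, Y i => H) 2, inferInstance, inferInstance, ζ, ?_, ?_, ?_⟩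
  · -- unit norm
    intro x
    have h2 : ‖ζ x‖^2 = 1 := by
      rw [lp2_norm_sq (ζ x)]
      rw [show (fun w => ‖ζ x w‖^2) = fun w => (ξ x w)^2 by
        funext w; rw [hζco, norm_smul, Real.norm_eq_abs, hu1, mul_one, sq_abs]]
      exact hnorm1 x
    rw [← Real.sqrt_sq (norm_nonneg (ζ x)), h2, Real.sqrt_one]
  · -- contraction on R-balls
    intro x y hxy
    have hdsum : Summable fun w => (ξ x w - ξ y w)^2 :=
      (lp2_summable_sq (ξ x - ξ y)).congr fun w => by
        rw [lp.coeFn_sub, Pi.sub_apply, Real.norm_eq_abs, sq_abs]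
    have hdle : ∑' w, (ξ x w - ξ y w)^2 ≤ ε₀^2 := by
      have h1 : ‖ξ x - ξ y‖^2 ≤ ε₀^2 := by
        have := hξ2 x y hxy
        nlinarith [norm_nonneg (ξ x - ξ y)]
      calc ∑' w, (ξ x w - ξ y w)^2 = ‖ξ x - ξ y‖^2 := by
            rw [lp2_norm_sq (ξ x - ξ y)]
            exact tsum_congr fun w => by
              rw [lp.coeFn_sub, Pi.sub_apply, Real.norm_eq_abs, sq_abs]
        _ ≤ ε₀^2 := h1
    have hu2 : ∀ w, ‖u w x - u w y‖ ≤ 2 := by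
      intro w
      calc ‖u w x - u w y‖ ≤ ‖u w x‖ + ‖u w y‖ := norm_sub_le _ _
        _ ≤ 2 := by rw [hu1, hu1]; norm_num
    have hgg : ∀ w, w ∈ G x → w ∈ G y → ‖u w x - u w y‖ ≤ ε' := by
      intro w hx hy
      obtain ⟨zx, hzx1, hzx2⟩ := hugood w x hx
      obtain ⟨zy, hzy1, hzy2⟩ := hugood w y hy
      rw [hzx2, hzy2]
      apply hη2
      calc dist (zx : X) (zy : X)
          ≤ dist (zx : X) x + dist x y + dist y (zy : X) := dist_triangle4 _ _ _ _
        _ ≤ S' + R + S' := by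
            have h1 : dist (zx : X) x ≤ S' := by rw [dist_comm]; exact hzx1.le
            have h2 : dist y (zy : X) ≤ S' := hzy1.le
            linarith
        _ = 2*S' + R := by ring
    -- the five majorant pieces
    have s1 : Summable fun w => 2*(ξ x w - ξ y w)^2 := hdsum.mul_left 2
    have s2 : Summable fun w => 2*ε'^2*(ξ y w)^2 := (hsum y).mul_left _
    have s3 : Summable fun w => ((G x)ᶜ).indicator (fun w => 16*(ξ x w)^2) w :=
      ((hsum x).mul_left 16).indicator _
    have s4 : Summable fun w => ((G x)ᶜ).indicator (fun w => 16*(ξ x w - ξ y w)^2) w :=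
      (hdsum.mul_left 16).indicator _
    have s5 : Summable fun w => ((G y)ᶜ).indicator (fun w => 8*(ξ y w)^2) w :=
      ((hsum y).mul_left 8).indicator _
    have key : ∀ w, ‖(ζ x - ζ y) w‖^2 ≤
        2*(ξ x w - ξ y w)^2 + 2*ε'^2*(ξ y w)^2
        + ((G x)ᶜ).indicator (fun w => 16*(ξ x w)^2) w
        + ((G x)ᶜ).indicator (fun w => 16*(ξ x w - ξ y w)^2) w
        + ((G y)ᶜ).indicator (fun w => 8*(ξ y w)^2) w := by
      intro w
      rw [lp.coeFn_sub, Pi.sub_apply]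
      have hsplit : ζ x w - ζ y w = (ξ x w - ξ y w) • u w x + ξ y w • (u w x - u w y) := by
        rw [hζco, hζco, sub_smul, smul_sub]; abel
      have hb : ‖ζ x w - ζ y w‖ ≤ |ξ x w - ξ y w| + |ξ y w| * ‖u w x - u w y‖ := by
        rw [hsplit]
        refine (norm_add_le _ _).trans ?_
        rw [norm_smul, norm_smul, Real.norm_eq_abs, Real.norm_eq_abs, hu1, mul_one]
      have hb2 : ‖ζ x w - ζ y w‖^2 ≤
          2*(ξ x w - ξ y w)^2 + 2*(ξ y w)^2*‖u w x - u w y‖^2 := by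
        nlinarith [norm_nonneg (ζ x w - ζ y w), abs_nonneg (ξ x w - ξ y w), abs_nonneg (ξ y w),
          norm_nonneg (u w x - u w y), sq_abs (ξ x w - ξ y w), sq_abs (ξ y w),
          sq_nonneg (|ξ x w - ξ y w| - |ξ y w| * ‖u w x - u w y‖),
          mul_nonneg (abs_nonneg (ξ y w)) (norm_nonneg (u w x - u w y))]
      by_cases hx : w ∈ G x
      · have e3 : ((G x)ᶜ).indicator (fun w => 16*(ξ x w)^2) w = 0 :=
          Set.indicator_of_notMem (by simpa using hx) _
        have e4 : ((G x)ᶜ).indicator (fun w => 16*(ξ x w - ξ y w)^2) w = 0 :=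
          Set.indicator_of_notMem (by simpa using hx) _
        by_cases hy : w ∈ G y
        · have e5 : ((G y)ᶜ).indicator (fun w => 8*(ξ y w)^2) w = 0 :=
            Set.indicator_of_notMem (by simpa using hy) _
          have hc := hgg w hx hy
          rw [e3, e4, e5]
          nlinarith [hb2, sq_nonneg (ξ y w), norm_nonneg (u w x - u w y),
            mul_le_mul hc hc (norm_nonneg _) (le_trans (norm_nonneg _) hc)]
        · have e5 : ((G y)ᶜ).indicator (fun w => 8*(ξ y w)^2) w = 8*(ξ y w)^2 :=
            Set.indicator_of_mem (by simpa using hy) _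
          rw [e3, e4, e5]
          have hc := hu2 w
          nlinarith [hb2, sq_nonneg (ξ y w), sq_nonneg ε', norm_nonneg (u w x - u w y),
            mul_le_mul hc hc (norm_nonneg _) (by norm_num : (0:ℝ) ≤ 2)]
      · have e3 : ((G x)ᶜ).indicator (fun w => 16*(ξ x w)^2) w = 16*(ξ x w)^2 :=
          Set.indicator_of_mem (by simpa using hx) _
        have e4 : ((G x)ᶜ).indicator (fun w => 16*(ξ x w - ξ y w)^2) w = 16*(ξ x w - ξ y w)^2 :=
          Set.indicator_of_mem (by simpa using hx) _
        rw [e3, e4]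
        have hc := hu2 w
        have hbsq : (ξ y w)^2 ≤ 2*(ξ x w)^2 + 2*(ξ x w - ξ y w)^2 := by
          nlinarith [sq_nonneg (2*(ξ x w) - ξ y w)]
        have hind : 0 ≤ ((G y)ᶜ).indicator (fun w => 8*(ξ y w)^2) w :=
          Set.indicator_nonneg (fun a _ => by positivity) w
        nlinarith [hb2, sq_nonneg ε', sq_nonneg (ξ y w), norm_nonneg (u w x - u w y),
          mul_le_mul hc hc (norm_nonneg _) (by norm_num : (0:ℝ) ≤ 2)]
    have hineq : ‖ζ x - ζ y‖^2 ≤ 18*ε₀^2 + 2*ε'^2 + 24*δ := by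
      rw [lp2_norm_sq (ζ x - ζ y)]
      calc ∑' w, ‖(ζ x - ζ y) w‖^2
          ≤ ∑' w, (2*(ξ x w - ξ y w)^2 + 2*ε'^2*(ξ y w)^2
            + ((G x)ᶜ).indicator (fun w => 16*(ξ x w)^2) w
            + ((G x)ᶜ).indicator (fun w => 16*(ξ x w - ξ y w)^2) w
            + ((G y)ᶜ).indicator (fun w => 8*(ξ y w)^2) w) := by
            refine Summable.tsum_le_tsum key (lp2_summable_sq _) ?_
            exact (((s1.add s2).add s3).add s4).add s5
        _ = (∑' w, 2*(ξ x w - ξ y w)^2) + (∑' w, 2*ε'^2*(ξ y w)^2)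
            + (∑' w, ((G x)ᶜ).indicator (fun w => 16*(ξ x w)^2) w)
            + (∑' w, ((G x)ᶜ).indicator (fun w => 16*(ξ x w - ξ y w)^2) w)
            + (∑' w, ((G y)ᶜ).indicator (fun w => 8*(ξ y w)^2) w) :=
            tsum_five _ _ _ _ _ s1 s2 s3 s4 s5
        _ ≤ 18*ε₀^2 + 2*ε'^2 + 24*δ := by
            have t1 : (∑' w, 2*(ξ x w - ξ y w)^2) ≤ 2*ε₀^2 := by
              rw [tsum_mul_left]
              nlinarith [hdle]
            have t2 : (∑' w, 2*ε'^2*(ξ y w)^2) = 2*ε'^2 := by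
              rw [tsum_mul_left, hnorm1 y, mul_one]
            have t3 : (∑' w, ((G x)ᶜ).indicator (fun w => 16*(ξ x w)^2) w) ≤ 16*δ := by
              have e : ∀ w, ((G x)ᶜ).indicator (fun w => 16*(ξ x w)^2) w
                  = 16 * ((G x)ᶜ).indicator (fun w => (ξ x w)^2) w := fun w =>
                Set.indicator_const_mul _ _ _ _
              rw [tsum_congr e, tsum_mul_left]
              nlinarith [hTail x]
            have t4 : (∑' w, ((G x)ᶜ).indicator (fun w => 16*(ξ x w - ξ y w)^2) w)
                ≤ 16*ε₀^2 := by
              calc (∑' w, ((G x)ᶜ).indicator (fun w => 16*(ξ x w - ξ y w)^2) w)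
                  ≤ ∑' w, 16*(ξ x w - ξ y w)^2 := by
                    refine Summable.tsum_le_tsum ?_ s4 (hdsum.mul_left 16)
                    exact fun w => Set.indicator_le_self' (fun a _ => by positivity) w
                _ ≤ 16*ε₀^2 := by rw [tsum_mul_left]; nlinarith [hdle]
            have t5 : (∑' w, ((G y)ᶜ).indicator (fun w => 8*(ξ y w)^2) w) ≤ 8*δ := by
              have e : ∀ w, ((G y)ᶜ).indicator (fun w => 8*(ξ y w)^2) w
                  = 8 * ((G y)ᶜ).indicator (fun w => (ξ y w)^2) w := fun w =>
                Set.indicator_const_mul _ _ _ _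
              rw [tsum_congr e, tsum_mul_left]
              nlinarith [hTail y]
            linarith
    have hfin : ‖ζ x - ζ y‖^2 ≤ ε^2 := by
      refine hineq.trans ?_
      rw [hε₀def, hε'def]
      nlinarith [hδε, sq_nonneg ε]
    calc ‖ζ x - ζ y‖ = Real.sqrt (‖ζ x - ζ y‖^2) := (Real.sqrt_sq (norm_nonneg _)).symm
      _ ≤ Real.sqrt (ε^2) := Real.sqrt_le_sqrt hfin
      _ = ε := Real.sqrt_sq hε.le
  · -- decay of inner products
    refine ⟨S₁ + 2*S', fun x y hT => ?_⟩
    have hsinner : Summable fun w => (inner ℝ (ζ x w) (ζ y w) : ℝ) :=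
      lp.summable_inner (𝕜 := ℝ) (ζ x) (ζ y)
    have huu : ∀ w, |(inner ℝ (u w x) (u w y) : ℝ)| ≤ 1 := by
      intro w
      have := abs_real_inner_le_norm (u w x) (u w y)
      rwa [hu1, hu1, mul_one] at this
    have huu4 : ∀ w, w ∈ G x → w ∈ G y → |(inner ℝ (u w x) (u w y) : ℝ)| ≤ 1/4 := by
      intro w hx hy
      obtain ⟨zx, hzx1, hzx2⟩ := hugood w x hx
      obtain ⟨zy, hzy1, hzy2⟩ := hugood w y hy
      rw [hzx2, hzy2]
      apply hS₁
      have h4 : dist x y ≤ dist x (zx : X) + dist (zx : X) (zy : X) + dist (zy : X) y :=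
        dist_triangle4 _ _ _ _
      have h5 : dist (zy : X) y ≤ S' := by rw [dist_comm]; exact hzy1.le
      linarith [hzx1.le]
    -- six majorant pieces
    have s1 : Summable fun w => (1/8)*(ξ x w)^2 := (hsum x).mul_left _
    have s2 : Summable fun w => (1/8)*(ξ y w)^2 := (hsum y).mul_left _
    have s3 : Summable fun w => ((G x)ᶜ).indicator (fun w => 4*(ξ x w)^2) w :=
      ((hsum x).mul_left 4).indicator _
    have s4 : Summable fun w => ((G x)ᶜ).indicator (fun w => (1/16)*(ξ y w)^2) w :=
      ((hsum y).mul_left _).indicator _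
    have s5 : Summable fun w => ((G y)ᶜ).indicator (fun w => (1/16)*(ξ x w)^2) w :=
      ((hsum x).mul_left _).indicator _
    have s6 : Summable fun w => ((G y)ᶜ).indicator (fun w => 4*(ξ y w)^2) w :=
      ((hsum y).mul_left 4).indicator _
    have key : ∀ w, (inner ℝ (ζ x w) (ζ y w) : ℝ) ≤
        (1/8)*(ξ x w)^2 + (1/8)*(ξ y w)^2
        + ((G x)ᶜ).indicator (fun w => 4*(ξ x w)^2) w
        + ((G x)ᶜ).indicator (fun w => (1/16)*(ξ y w)^2) w
        + ((G y)ᶜ).indicator (fun w => (1/16)*(ξ x w)^2) w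
        + ((G y)ᶜ).indicator (fun w => 4*(ξ y w)^2) w := by
      intro w
      have habs : |(inner ℝ (ζ x w) (ζ y w) : ℝ)|
          = |ξ x w| * |ξ y w| * |(inner ℝ (u w x) (u w y) : ℝ)| := by
        rw [hζco, hζco, real_inner_smul_left, real_inner_smul_right, abs_mul, abs_mul, mul_assoc]
      have hle : (inner ℝ (ζ x w) (ζ y w) : ℝ)
          ≤ |ξ x w| * |ξ y w| * |(inner ℝ (u w x) (u w y) : ℝ)| := by
        rw [← habs]; exact le_abs_self _
      by_cases hx : w ∈ G x
      · have e3 : ((G x)ᶜ).indicator (fun w => 4*(ξ x w)^2) w = 0 :=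
          Set.indicator_of_notMem (by simpa using hx) _
        have e4 : ((G x)ᶜ).indicator (fun w => (1/16)*(ξ y w)^2) w = 0 :=
          Set.indicator_of_notMem (by simpa using hx) _
        by_cases hy : w ∈ G y
        · have e5 : ((G y)ᶜ).indicator (fun w => (1/16)*(ξ x w)^2) w = 0 :=
            Set.indicator_of_notMem (by simpa using hy) _
          have e6 : ((G y)ᶜ).indicator (fun w => 4*(ξ y w)^2) w = 0 :=
            Set.indicator_of_notMem (by simpa using hy) _
          rw [e3, e4, e5, e6]
          have h4 := huu4 w hx hy
          have hprod : |ξ x w| * |ξ y w| * |(inner ℝ (u w x) (u w y) : ℝ)|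
              ≤ |ξ x w| * |ξ y w| * (1/4) := by
            refine mul_le_mul_of_nonneg_left h4 ?_
            positivity
          refine hle.trans (hprod.trans ?_)
          nlinarith [sq_nonneg (|ξ x w| - |ξ y w|), sq_abs (ξ x w), sq_abs (ξ y w),
            abs_nonneg (ξ x w), abs_nonneg (ξ y w)]
        · have e6 : ((G y)ᶜ).indicator (fun w => 4*(ξ y w)^2) w = 4*(ξ y w)^2 :=
            Set.indicator_of_mem (by simpa using hy) _
          have e5 : ((G y)ᶜ).indicator (fun w => (1/16)*(ξ x w)^2) w = (1/16)*(ξ x w)^2 :=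
            Set.indicator_of_mem (by simpa using hy) _
          rw [e3, e4, e5, e6]
          have hprod : |ξ x w| * |ξ y w| * |(inner ℝ (u w x) (u w y) : ℝ)|
              ≤ |ξ x w| * |ξ y w| := by
            have := huu w
            nlinarith [abs_nonneg (ξ x w), abs_nonneg (ξ y w),
              mul_nonneg (abs_nonneg (ξ x w)) (abs_nonneg (ξ y w)),
              abs_nonneg (inner ℝ (u w x) (u w y) : ℝ)]
          refine hle.trans (hprod.trans ?_)
          nlinarith [sq_nonneg (2*|ξ y w| - |ξ x w|/4), sq_abs (ξ x w), sq_abs (ξ y w),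
            sq_nonneg (ξ x w), sq_nonneg (ξ y w)]
      · have e3 : ((G x)ᶜ).indicator (fun w => 4*(ξ x w)^2) w = 4*(ξ x w)^2 :=
          Set.indicator_of_mem (by simpa using hx) _
        have e4 : ((G x)ᶜ).indicator (fun w => (1/16)*(ξ y w)^2) w = (1/16)*(ξ y w)^2 :=
          Set.indicator_of_mem (by simpa using hx) _
        rw [e3, e4]
        have hprod : |ξ x w| * |ξ y w| * |(inner ℝ (u w x) (u w y) : ℝ)|
            ≤ |ξ x w| * |ξ y w| := by
          have := huu w
          nlinarith [abs_nonneg (ξ x w), abs_nonneg (ξ y w),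
            mul_nonneg (abs_nonneg (ξ x w)) (abs_nonneg (ξ y w)),
            abs_nonneg (inner ℝ (u w x) (u w y) : ℝ)]
        have hind5 : 0 ≤ ((G y)ᶜ).indicator (fun w => (1/16)*(ξ x w)^2) w :=
          Set.indicator_nonneg (fun a _ => by positivity) w
        have hind6 : 0 ≤ ((G y)ᶜ).indicator (fun w => 4*(ξ y w)^2) w :=
          Set.indicator_nonneg (fun a _ => by positivity) w
        refine hle.trans (hprod.trans ?_)
        nlinarith [sq_nonneg (2*|ξ x w| - |ξ y w|/4), sq_abs (ξ x w), sq_abs (ξ y w),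
          sq_nonneg (ξ x w), sq_nonneg (ξ y w)]
    have hsqrtδ : Real.sqrt δ ≤ 1/8 := by
      rw [show (1/8 : ℝ) = Real.sqrt ((1/8)^2) from (Real.sqrt_sq (by norm_num)).symm]
      exact Real.sqrt_le_sqrt (by nlinarith [hδ64])
    calc (inner ℝ (ζ x) (ζ y) : ℝ) = ∑' w, (inner ℝ (ζ x w) (ζ y w) : ℝ) :=
          lp.inner_eq_tsum (ζ x) (ζ y)
      _ ≤ ∑' w, ((1/8)*(ξ x w)^2 + (1/8)*(ξ y w)^2
            + ((G x)ᶜ).indicator (fun w => 4*(ξ x w)^2) w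
            + ((G x)ᶜ).indicator (fun w => (1/16)*(ξ y w)^2) w
            + ((G y)ᶜ).indicator (fun w => (1/16)*(ξ x w)^2) w
            + ((G y)ᶜ).indicator (fun w => 4*(ξ y w)^2) w) := by
            refine Summable.tsum_le_tsum key hsinner ?_
            exact ((((s1.add s2).add s3).add s4).add s5).add s6
      _ = (∑' w, (1/8)*(ξ x w)^2) + (∑' w, (1/8)*(ξ y w)^2)
            + (∑' w, ((G x)ᶜ).indicator (fun w => 4*(ξ x w)^2) w)
            + (∑' w, ((G x)ᶜ).indicator (fun w => (1/16)*(ξ y w)^2) w)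
            + (∑' w, ((G y)ᶜ).indicator (fun w => (1/16)*(ξ x w)^2) w)
            + (∑' w, ((G y)ᶜ).indicator (fun w => 4*(ξ y w)^2) w) :=
          tsum_six _ _ _ _ _ _ s1 s2 s3 s4 s5 s6
      _ ≤ 1/2 := by
          have t1 : (∑' w, (1/8)*(ξ x w)^2) = 1/8 := by rw [tsum_mul_left, hnorm1 x, mul_one]
          have t2 : (∑' w, (1/8)*(ξ y w)^2) = 1/8 := by rw [tsum_mul_left, hnorm1 y, mul_one]
          have t3 : (∑' w, ((G x)ᶜ).indicator (fun w => 4*(ξ x w)^2) w) ≤ 4*δ := by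
            rw [tsum_congr (fun w => Set.indicator_const_mul ((G x)ᶜ) (fun w => (ξ x w)^2) 4 w),
              tsum_mul_left]
            nlinarith [hTail x]
          have t4 : (∑' w, ((G x)ᶜ).indicator (fun w => (1/16)*(ξ y w)^2) w) ≤ 1/16 := by
            calc (∑' w, ((G x)ᶜ).indicator (fun w => (1/16)*(ξ y w)^2) w)
                ≤ ∑' w, (1/16)*(ξ y w)^2 := by
                  refine Summable.tsum_le_tsum ?_ s4 ((hsum y).mul_left _)
                  exact fun w => Set.indicator_le_self' (fun a _ => by positivity) w
              _ = 1/16 := by rw [tsum_mul_left, hnorm1 y, mul_one]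
          have t5 : (∑' w, ((G y)ᶜ).indicator (fun w => (1/16)*(ξ x w)^2) w) ≤ 1/16 := by
            calc (∑' w, ((G y)ᶜ).indicator (fun w => (1/16)*(ξ x w)^2) w)
                ≤ ∑' w, (1/16)*(ξ x w)^2 := by
                  refine Summable.tsum_le_tsum ?_ s5 ((hsum x).mul_left _)
                  exact fun w => Set.indicator_le_self' (fun a _ => by positivity) w
              _ = 1/16 := by rw [tsum_mul_left, hnorm1 x, mul_one]
          have t6 : (∑' w, ((G y)ᶜ).indicator (fun w => 4*(ξ y w)^2) w) ≤ 4*δ := by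
            rw [tsum_congr (fun w => Set.indicator_const_mul ((G y)ᶜ) (fun w => (ξ y w)^2) 4 w),
              tsum_mul_left]
            nlinarith [hTail y]
          have hδ' : 8*δ ≤ 1/8 := by linarith [hδ64]
          linarith

/-- Data for one scale of the embedding construction. -/
structure CEStage (X : Type) [MetricSpace X] (R ε : ℝ) where
  H : Type
  [nH : NormedAddCommGroup H]
  [iH : InnerProductSpace ℝ H]
  η : X → H
  unit : ∀ x, ‖η x‖ = 1
  close : ∀ x y : X, dist x y ≤ R → ‖η x - η y‖ ≤ ε
  T : ℝ
  far : ∀ x y : X, T ≤ dist x y → (inner ℝ (η x) (η y) : ℝ) ≤ 1/2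

attribute [instance] CEStage.nH CEStage.iH

def CEStage.ofExists {X : Type} [MetricSpace X] {R ε : ℝ}
    (h : ∃ (H : Type) (nH : NormedAddCommGroup H)
        (iH : @InnerProductSpace ℝ H _ nH.toSeminormedAddCommGroup) (η : X → H),
        (∀ x, ‖η x‖ = 1) ∧ (∀ x y : X, dist x y ≤ R → ‖η x - η y‖ ≤ ε) ∧
        ∃ T : ℝ, ∀ x y : X, T ≤ dist x y →
          (@inner ℝ H iH.toInner (η x) (η y)) ≤ 1/2) : CEStage X R ε :=
  letI nH := h.choose_spec.choose
  letI iH := h.choose_spec.choose_spec.choose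
  { H := h.choose
    nH := nH
    iH := iH
    η := h.choose_spec.choose_spec.choose_spec.choose
    unit := h.choose_spec.choose_spec.choose_spec.choose_spec.1
    close := h.choose_spec.choose_spec.choose_spec.choose_spec.2.1
    T := h.choose_spec.choose_spec.choose_spec.choose_spec.2.2.choose
    far := h.choose_spec.choose_spec.choose_spec.choose_spec.2.2.choose_spec }

set_option maxHeartbeats 1000000 in
lemma glue (X : Type) [MetricSpace X] (x₀ : X)
    (D : ∀ k : ℕ, CEStage X (k+1) ((2:ℝ)⁻¹^k)) : CoarselyEmbeddable X := by
  classical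
  have hpow : ∀ k : ℕ, (((2:ℝ)⁻¹^k))^2 = (4⁻¹:ℝ)^k := by
    intro k
    rw [← pow_mul, mul_comm, pow_mul]
    norm_num
  have hgeo : Summable (fun k : ℕ => (4⁻¹:ℝ)^k) :=
    summable_geometric_of_lt_one (by norm_num) (by norm_num)
  have hbd2 : ∀ (k : ℕ) (x y : X), ‖(D k).η x - (D k).η y‖ ≤ 2 := by
    intro k x y
    calc ‖(D k).η x - (D k).η y‖ ≤ ‖(D k).η x‖ + ‖(D k).η y‖ := norm_sub_le _ _
      _ ≤ 2 := by rw [(D k).unit, (D k).unit]; norm_num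
  -- termwise majorant
  have hmaj : ∀ x y : X, ∀ k : ℕ,
      ‖(D k).η x - (D k).η y‖^2 ≤ (if k < ⌈dist x y⌉₊ then (4:ℝ) else 0) + (4⁻¹:ℝ)^k := by
    intro x y k
    by_cases hk : k < ⌈dist x y⌉₊
    · rw [if_pos hk]
      have h1 := hbd2 k x y
      have h2 : (0:ℝ) ≤ (4⁻¹:ℝ)^k := by positivity
      nlinarith [norm_nonneg ((D k).η x - (D k).η y)]
    · rw [if_neg hk, zero_add]
      push_neg at hk
      have hd : dist x y ≤ (k:ℝ) + 1 := by
        have h1 : dist x y ≤ (⌈dist x y⌉₊ : ℝ) := Nat.le_ceil _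
        have h2 : ((⌈dist x y⌉₊ : ℕ) : ℝ) ≤ (k:ℝ) := Nat.cast_le.2 hk
        linarith
      have h3 := (D k).close x y (by exact_mod_cast hd)
      have h4 : (0:ℝ) ≤ (2:ℝ)⁻¹^k := by positivity
      calc ‖(D k).η x - (D k).η y‖^2 ≤ ((2:ℝ)⁻¹^k)^2 := by
            nlinarith [norm_nonneg ((D k).η x - (D k).η y)]
        _ = (4⁻¹:ℝ)^k := hpow k
  have hmajsum : ∀ N : ℕ, Summable (fun k : ℕ => (if k < N then (4:ℝ) else 0) + (4⁻¹:ℝ)^k) := by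
    intro N
    refine Summable.add ?_ hgeo
    apply summable_of_ne_finset_zero (s := Finset.range N)
    intro i hi
    rw [Finset.mem_range] at hi
    simp [hi]
  have hsqsum : ∀ x y : X, Summable (fun k => ‖(D k).η x - (D k).η y‖^2) := by
    intro x y
    exact Summable.of_nonneg_of_le (fun k => sq_nonneg _) (hmaj x y) (hmajsum _)
  have hub : ∀ x y : X, ∑' k, ‖(D k).η x - (D k).η y‖^2 ≤ 4 * dist x y + 6 := by
    intro x y
    have h1 : ∑' k, ‖(D k).η x - (D k).η y‖^2
        ≤ ∑' k, ((if k < ⌈dist x y⌉₊ then (4:ℝ) else 0) + (4⁻¹:ℝ)^k) :=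
      Summable.tsum_le_tsum (hmaj x y) (hsqsum x y) (hmajsum _)
    have h2 : ∑' k, ((if k < ⌈dist x y⌉₊ then (4:ℝ) else 0) + (4⁻¹:ℝ)^k)
        = (∑' k, (if k < ⌈dist x y⌉₊ then (4:ℝ) else 0)) + ∑' k, (4⁻¹:ℝ)^k := by
      refine Summable.tsum_add ?_ hgeo
      apply summable_of_ne_finset_zero (s := Finset.range ⌈dist x y⌉₊)
      intro i hi
      rw [Finset.mem_range] at hi
      simp [hi]
    have h3 : (∑' k, (if k < ⌈dist x y⌉₊ then (4:ℝ) else 0)) = 4 * (⌈dist x y⌉₊ : ℝ) := by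
      rw [tsum_eq_sum (s := Finset.range ⌈dist x y⌉₊)
        (by intro i hi; rw [Finset.mem_range] at hi; simp [hi])]
      rw [Finset.sum_congr rfl (fun i hi => if_pos (Finset.mem_range.1 hi))]
      rw [Finset.sum_const, Finset.card_range]
      push_cast
      ring
    have h4 : ∑' k, (4⁻¹:ℝ)^k = (1 - 4⁻¹)⁻¹ :=
      tsum_geometric_of_lt_one (by norm_num) (by norm_num)
    have h5 : (⌈dist x y⌉₊ : ℝ) < dist x y + 1 := Nat.ceil_lt_add_one dist_nonneg
    rw [h2, h3, h4] at h1
    nlinarith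
  -- the embedding
  have hmem : ∀ x : X, Memℓp (fun k => (D k).η x - (D k).η x₀) 2 :=
    fun x => memℓp_two (hsqsum x x₀)
  set Φ : X → lp (fun k => (D k).H) 2 := fun x => ⟨fun k => (D k).η x - (D k).η x₀, hmem x⟩
    with hΦdef
  have hdiff : ∀ x y : X, ∀ k, (Φ x - Φ y) k = (D k).η x - (D k).η y := by
    intro x y k
    rw [lp.coeFn_sub, Pi.sub_apply]
    show ((D k).η x - (D k).η x₀) - ((D k).η y - (D k).η x₀) = _
    abel
  have hnormsq : ∀ x y : X, ‖Φ x - Φ y‖^2 = ∑' k, ‖(D k).η x - (D k).η y‖^2 := by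
    intro x y
    rw [lp2_norm_sq (Φ x - Φ y)]
    exact tsum_congr fun k => by rw [hdiff]
  -- lower bound scales
  set T' : ℕ → ℝ := fun m => m + ∑ k ∈ Finset.range (m+1), max ((D k).T) 0 with hT'def
  have hT'self : ∀ m : ℕ, (m:ℝ) ≤ T' m := by
    intro m
    have : (0:ℝ) ≤ ∑ k ∈ Finset.range (m+1), max ((D k).T) 0 :=
      Finset.sum_nonneg (fun k _ => le_max_right _ _)
    rw [hT'def]
    simpa using this
  have hT'T : ∀ k m : ℕ, k ≤ m → (D k).T ≤ T' m := by
    intro k m hkm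
    have h1 : max ((D k).T) 0 ≤ ∑ j ∈ Finset.range (m+1), max ((D j).T) 0 :=
      Finset.single_le_sum (f := fun j => max ((D j).T) 0) (fun j _ => le_max_right _ _)
        (Finset.mem_range.2 (Nat.lt_succ_of_le hkm))
    have h2 : (D k).T ≤ max ((D k).T) 0 := le_max_left _ _
    have h3 : (0:ℝ) ≤ (m:ℝ) := Nat.cast_nonneg m
    rw [hT'def]
    simp only
    linarith
  have hT'mono : Monotone T' := by
    intro a b hab
    rw [hT'def]
    simp only
    have h1 : (a:ℝ) ≤ b := Nat.cast_le.2 hab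
    have h2 : ∑ k ∈ Finset.range (a+1), max ((D k).T) 0
        ≤ ∑ k ∈ Finset.range (b+1), max ((D k).T) 0 :=
      Finset.sum_le_sum_of_subset_of_nonneg
        (Finset.range_subset_range.2 (by omega)) (fun k _ _ => le_max_right _ _)
    linarith
  have hlow : ∀ (m : ℕ) (x y : X), T' m ≤ dist x y → (m:ℝ) ≤ ‖Φ x - Φ y‖^2 := by
    intro m x y hm
    have hterm : ∀ k ∈ Finset.range (m+1), (1:ℝ) ≤ ‖(D k).η x - (D k).η y‖^2 := by
      intro k hk
      have hk' : k ≤ m := Nat.lt_succ_iff.1 (Finset.mem_range.1 hk)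
      have hfar := (D k).far x y (le_trans (hT'T k m hk') hm)
      have hexp : ‖(D k).η x - (D k).η y‖^2
          = ‖(D k).η x‖^2 - 2 * (inner ℝ ((D k).η x) ((D k).η y) : ℝ) + ‖(D k).η y‖^2 :=
        norm_sub_sq_real _ _
      rw [hexp, (D k).unit, (D k).unit]
      linarith
    have h1 : ((m:ℝ) + 1) ≤ ∑ k ∈ Finset.range (m+1), ‖(D k).η x - (D k).η y‖^2 := by
      calc ((m:ℝ) + 1) = ∑ k ∈ Finset.range (m+1), (1:ℝ) := by
            rw [Finset.sum_const, Finset.card_range]; push_cast; ring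
        _ ≤ _ := Finset.sum_le_sum hterm
    have h2 : ∑ k ∈ Finset.range (m+1), ‖(D k).η x - (D k).η y‖^2
        ≤ ∑' k, ‖(D k).η x - (D k).η y‖^2 :=
      Summable.sum_le_tsum _ (fun k _ => sq_nonneg _) (hsqsum x y)
    rw [hnormsq]
    linarith
  -- the control functions
  set ρm : ℝ → ℝ := fun t => Real.sqrt (Nat.findGreatest (fun m => T' m ≤ t) ⌊max t 0⌋₊)
    with hρmdef
  set ρp : ℝ → ℝ := fun t => Real.sqrt (4 * max t 0 + 6) with hρpdef
  have hFGle : ∀ a b : ℝ, a ≤ b →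
      Nat.findGreatest (fun m => T' m ≤ a) ⌊max a 0⌋₊
        ≤ Nat.findGreatest (fun m => T' m ≤ b) ⌊max b 0⌋₊ := by
    intro a b hab
    by_cases h0 : Nat.findGreatest (fun m => T' m ≤ a) ⌊max a 0⌋₊ = 0
    · rw [h0]; exact Nat.zero_le _
    · set m := Nat.findGreatest (fun m => T' m ≤ a) ⌊max a 0⌋₊ with hm
      have hPm : T' m ≤ a := Nat.findGreatest_of_ne_zero hm.symm h0
      have hmb : (m:ℝ) ≤ max b 0 := le_trans (hT'self m) (le_trans hPm (le_trans hab (le_max_left _ _)))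
      exact Nat.le_findGreatest (Nat.le_floor hmb) (le_trans hPm hab)
  refine ⟨lp (fun k => (D k).H) 2, inferInstance, inferInstance, Φ, ρm, ρp, ?_, ?_, ?_, ?_, ?_⟩
  · -- ρm monotone
    intro a b hab
    exact Real.sqrt_le_sqrt (Nat.cast_le.2 (hFGle a b hab))
  · -- ρp monotone
    intro a b hab
    apply Real.sqrt_le_sqrt
    have := max_le_max hab (le_refl (0:ℝ))
    linarith
  · -- ρm tendsto
    rw [tendsto_atTop_atTop]
    intro b
    set M : ℕ := ⌈max b 0⌉₊ ^ 2 with hM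
    refine ⟨T' M, fun a ha => ?_⟩
    have hM0 : (0:ℝ) ≤ (M:ℝ) := Nat.cast_nonneg _
    have ha0 : (0:ℝ) ≤ a := le_trans (le_trans hM0 (hT'self M)) ha
    have hMfloor : M ≤ ⌊max a 0⌋₊ :=
      Nat.le_floor (le_trans (hT'self M) (le_trans ha (le_max_left _ _)))
    have hFG : M ≤ Nat.findGreatest (fun m => T' m ≤ a) ⌊max a 0⌋₊ :=
      Nat.le_findGreatest hMfloor ha
    have h1 : Real.sqrt (M:ℝ) ≤ ρm a := Real.sqrt_le_sqrt (Nat.cast_le.2 hFG)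
    have h2 : Real.sqrt (M:ℝ) = (⌈max b 0⌉₊ : ℝ) := by
      rw [hM]
      push_cast
      exact Real.sqrt_sq (Nat.cast_nonneg _)
    have h3 : b ≤ (⌈max b 0⌉₊ : ℝ) := le_trans (le_max_left _ _) (Nat.le_ceil _)
    linarith
  · -- ρp tendsto
    rw [tendsto_atTop_atTop]
    intro b
    refine ⟨(max b 0)^2, fun a ha => ?_⟩
    have h0 : (0:ℝ) ≤ (max b 0)^2 := sq_nonneg _
    have ha' : max b 0 ^ 2 ≤ max a 0 := le_trans ha (le_max_left _ _)
    have h1 : Real.sqrt ((max b 0)^2) ≤ ρp a := by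
      apply Real.sqrt_le_sqrt
      nlinarith
    rw [Real.sqrt_sq (le_max_right _ _)] at h1
    linarith [le_max_left b 0]
  · -- the two estimates
    intro x y
    constructor
    · by_cases h0 : Nat.findGreatest (fun m => T' m ≤ dist x y) ⌊max (dist x y) 0⌋₊ = 0
      · rw [hρmdef]
        simp only [h0]
        rw [Nat.cast_zero, Real.sqrt_zero]
        exact norm_nonneg _
      · set m := Nat.findGreatest (fun m => T' m ≤ dist x y) ⌊max (dist x y) 0⌋₊ with hm
        have hPm : T' m ≤ dist x y := Nat.findGreatest_of_ne_zero hm.symm h0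
        have h1 := hlow m x y hPm
        calc ρm (dist x y) = Real.sqrt (m:ℝ) := rfl
          _ ≤ Real.sqrt (‖Φ x - Φ y‖^2) := Real.sqrt_le_sqrt h1
          _ = ‖Φ x - Φ y‖ := Real.sqrt_sq (norm_nonneg _)
    · have h1 : ‖Φ x - Φ y‖^2 ≤ 4 * dist x y + 6 := by
        rw [hnormsq]; exact hub x y
      calc ‖Φ x - Φ y‖ = Real.sqrt (‖Φ x - Φ y‖^2) := (Real.sqrt_sq (norm_nonneg _)).symm
        _ ≤ Real.sqrt (4 * max (dist x y) 0 + 6) := by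
            apply Real.sqrt_le_sqrt
            rw [max_eq_left dist_nonneg]
            exact h1
        _ = ρp (dist x y) := rfl

/-- If `{φ i}` is a strongly embeddable family of maps and the preimages form an
equi-coarsely embeddable family of metric spaces, then `X` is coarsely embeddable. -/
theorem coarselyEmbeddable_of_seFamily (X : Type) [MetricSpace X]
    (hud : UniformlyDiscrete X) (hbg : BoundedGeometry X)
    {n : ℕ} {Y : Fin n → Type} (φ : ∀ i, X → Y i)
    (hse : SEFamily φ)
    (hequi : EquiCoarselyEmbeddable (fun p : Σ i, Y i => φ p.1 ⁻¹' {p.2})) :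
    CoarselyEmbeddable X := by
  rcases isEmpty_or_nonempty X with hX | hX
  · haveI := hX
    exact ⟨ℝ, inferInstance, inferInstance, fun x => isEmptyElim x, id, id,
      monotone_id, monotone_id, tendsto_id, tendsto_id, fun x y => isEmptyElim x⟩
  · obtain ⟨x₀⟩ := hX
    have hn : 0 < n := by
      rcases Nat.eq_zero_or_pos n with h0 | h
      · subst h0
        obtain ⟨ξ, hξ1, -, -⟩ := hse 1 one_pos 1 one_pos
        haveI : IsEmpty ((i : Fin 0) × Y i) := ⟨fun w => w.1.elim0⟩
        have h2 := lp2_norm_sq (ξ x₀)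
        rw [hξ1 x₀, one_pow, tsum_empty] at h2
        norm_num at h2
      · exact h
    exact glue X x₀ (fun k => CEStage.ofExists
      (stage φ hse hequi x₀ ⟨0, hn⟩
        (R := (k:ℝ)+1) (by positivity) (ε := (2:ℝ)⁻¹^k) (by positivity)))

end
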